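/- Łukasiewicz logic fails strong completeness: there exist a set S of formulas and a formula α such that S ⊨ α holds but S ⊢ α does not hold. -/

import Mathlib

/-- Formulas of Łukasiewicz infinite-valued propositional logic:
propositional variables `var n` (with `X₁ = var 0`), falsum `⊥`, negation, implication. -/
inductive LForm : Type
  | var : ℕ → LForm
  | bot : LForm
  | neg : LForm → LForm
  | imp : LForm → LForm → LForm

namespace LForm

/-- The propositional variable X₁. -/
def X1 : LForm := var 0

/-- Lattice disjunction: α ∨ β := (α → β) → β. -/
def or (α β : LForm) : LForm := imp (imp α β) β

/-- Lattice conjunction: α ∧ β := ¬(¬α ∨ ¬β). -/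
def and (α β : LForm) : LForm := neg (or (neg α) (neg β))

/-- Biconditional: α ↔ β := (α → β) ∧ (β → α). -/
def iff (α β : LForm) : LForm := and (imp α β) (imp β α)

/-- Strong disjunction: α ⊕ β := ¬α → β. -/
def oplus (α β : LForm) : LForm := imp (neg α) β

/-- The predicate "all variables occurring in the formula are X₁". -/
def onlyX1 : LForm → Prop
  | var n => n = 0
  | bot => True
  | neg α => onlyX1 α
  | imp α β => onlyX1 α ∧ onlyX1 β

end LForm

/-- Form₁: the set of formulas built from the single variable X₁ (and ⊥, ¬, →). -/
def Form1 : Set LForm := { α | α.onlyX1 }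

/-- Provability in Łukasiewicz logic from a set `S` of assumptions: the smallest
relation containing the members of `S` and all instances of the axiom schemata
(A0)–(A4), closed under modus ponens. -/
inductive LProv (S : Set LForm) : LForm → Prop
  | hyp {α : LForm} : α ∈ S → LProv S α
  | a0 (α : LForm) : LProv S (LForm.bot.imp α)
  | a1 (α β : LForm) : LProv S (α.imp (β.imp α))
  | a2 (α β γ : LForm) : LProv S ((α.imp β).imp ((β.imp γ).imp (α.imp γ)))
  | a3 (α β : LForm) : LProv S (((α.imp β).imp β).imp ((β.imp α).imp α))
  | a4 (α β : LForm) : LProv S ((α.neg.imp β.neg).imp (β.imp α))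
  | mp {α β : LForm} : LProv S (α.imp β) → LProv S α → LProv S β

/-- A [0,1]-valued evaluation (possible world) for Łukasiewicz logic. -/
structure LEval where
  w : LForm → ℝ
  mem01 : ∀ α, w α ∈ Set.Icc (0 : ℝ) 1
  map_bot : w LForm.bot = 0
  map_neg : ∀ α, w α.neg = 1 - w α
  map_imp : ∀ α β, w (α.imp β) = min 1 (1 - (w α - w β))

/-- Semantic consequence: every evaluation making all of `S` true (value 1)
makes `α` true. -/
def LSem (S : Set LForm) (α : LForm) : Prop :=
  ∀ v : LEval, (∀ β ∈ S, v.w β = 1) → v.w α = 1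

/-- The evaluation determined compositionally by an atomic assignment `v`. -/
def evalFun (v : ℕ → ℝ) : LForm → ℝ
  | .var n => v n
  | .bot => 0
  | .neg α => 1 - evalFun v α
  | .imp α β => min 1 (1 - (evalFun v α - evalFun v β))

/-- Θ_r: the one-variable formulas true (value 1) in every possible world `w`
with `w(X₁) = r`. -/
def Theta (r : ℝ) : Set LForm :=
  { α | α ∈ Form1 ∧ ∀ v : LEval, v.w LForm.X1 = r → v.w α = 1 }

/-- Θ_T: the one-variable formulas true (value 1) in every possible world `w`
with `w(X₁) ∈ T`. -/
def ThetaT (T : Set ℝ) : Set LForm :=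
  { α | α ∈ Form1 ∧ ∀ v : LEval, v.w LForm.X1 ∈ T → v.w α = 1 }

/-! ### Auxiliary material -/

namespace SCF

section MVImp

variable {G : Type*} [AddCommGroup G] [LinearOrder G] [IsOrderedAddMonoid G] {t : G}

/-- Łukasiewicz implication in a linearly ordered abelian group with top `t`. -/
def mvImp (t x y : G) : G := min t (t - x + y)

lemma mvImp_le_top (x y : G) : mvImp t x y ≤ t := min_le_left _ _

lemma mvImp_eq_top_iff {x y : G} : mvImp t x y = t ↔ x ≤ y := by
  unfold mvImp
  rw [min_eq_left_iff, show t - x + y = t + (y - x) by abel,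
    le_add_iff_nonneg_right, sub_nonneg]

lemma mvImp_eq_of_le {x y : G} (h : y ≤ x) : mvImp t x y = t - x + y := by
  unfold mvImp
  rw [min_eq_right_iff, show t - x + y = t + (y - x) by abel,
    add_le_iff_nonpos_right, sub_nonpos]
  exact h

lemma mvImp_nonneg {x y : G} (ht : 0 ≤ t) (hx : x ≤ t) (hy : 0 ≤ y) :
    0 ≤ mvImp t x y := by
  refine le_min ht ?_
  have h1 : 0 ≤ t - x := sub_nonneg.2 hx
  exact add_nonneg h1 hy

lemma mvImp_mono_right {x y z : G} (h : y ≤ z) : mvImp t x y ≤ mvImp t x z :=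
  min_le_min le_rfl (add_le_add_right h _)

lemma mvImp_A2 (a b c : G) :
    mvImp t a b ≤ mvImp t (mvImp t b c) (mvImp t a c) := by
  show mvImp t a b ≤ min t (t - mvImp t b c + mvImp t a c)
  refine le_min (mvImp_le_top _ _) ?_
  rcases le_total b c with h | h
  · rw [mvImp_eq_top_iff.2 h, show t - t + mvImp t a c = mvImp t a c by abel]
    exact mvImp_mono_right h
  · rw [mvImp_eq_of_le h]
    rcases le_total a c with h2 | h2
    · rw [mvImp_eq_top_iff.2 h2]
      calc mvImp t a b ≤ t := mvImp_le_top _ _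
        _ ≤ t - (t - b + c) + t := by
            rw [show t - (t - b + c) + t = t + (b - c) by abel]
            exact le_add_of_nonneg_right (sub_nonneg.2 h)
    · rw [mvImp_eq_of_le h2]
      calc mvImp t a b ≤ t - a + b := min_le_right _ _
        _ = t - (t - b + c) + (t - a + c) := by abel

lemma mvImp_max {a b : G} (ha : a ≤ t) (hb : b ≤ t) :
    mvImp t (mvImp t a b) b = max a b := by
  rcases le_total a b with h | h
  · rw [mvImp_eq_top_iff.2 h, mvImp_eq_of_le hb, max_eq_right h]
    abel
  · have h1 : b ≤ t - a + b := by
      rw [show t - a + b = b + (t - a) by abel]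
      exact le_add_of_nonneg_right (sub_nonneg.2 ha)
    rw [mvImp_eq_of_le h, mvImp_eq_of_le h1, max_eq_left h]
    abel

end MVImp

/-- The lexicographic group `ℤ ×ₗ ℤ`. -/
abbrev G2 := Lex (ℤ × ℤ)

/-- The top element. -/
def tt : G2 := toLex (1, 0)

lemma lex_sub (a b c d : ℤ) : toLex (a, b) - toLex (c, d) = toLex (a - c, b - d) := rfl
lemma lex_add (a b c d : ℤ) : toLex (a, b) + toLex (c, d) = toLex (a + c, b + d) := rfl
lemma lex_le {a b c d : ℤ} : toLex (a, b) ≤ toLex (c, d) ↔ a < c ∨ a = c ∧ b ≤ d :=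
  Prod.Lex.le_iff

/-- Valuation of formulas in the non-archimedean chain `Γ(ℤ ×ₗ ℤ, (1,0))`,
sending every variable to the co-infinitesimal `(1, -1)`. -/
def gval : LForm → G2
  | .var _ => toLex (1, -1)
  | .bot => 0
  | .neg α => tt - gval α
  | .imp α β => mvImp tt (gval α) (gval β)

lemma tt_nonneg : (0 : G2) ≤ tt := by decide

lemma gval_bounds : ∀ α : LForm, 0 ≤ gval α ∧ gval α ≤ tt := by
  intro α
  induction α with
  | var n =>
      constructor
      · show (0 : G2) ≤ toLex (1, -1); decide
      · show toLex ((1 : ℤ), (-1 : ℤ)) ≤ tt; decide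
  | bot => exact ⟨le_refl _, tt_nonneg⟩
  | neg α ih =>
      refine ⟨sub_nonneg.2 ih.2, ?_⟩
      show tt - gval α ≤ tt
      rw [show tt - gval α = tt + (-gval α) by abel]
      exact add_le_of_nonpos_right (neg_nonpos.2 ih.1)
  | imp α β ihα ihβ =>
      exact ⟨mvImp_nonneg tt_nonneg ihα.2 ihβ.1, mvImp_le_top _ _⟩

/-- δ₀ = X₁ and δ_{n+1} = X₁ ⊙ δ_n (strong conjunction). -/
def delta : ℕ → LForm
  | 0 => LForm.X1
  | n + 1 => LForm.neg (LForm.imp LForm.X1 (LForm.neg (delta n)))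

/-- σ_n := ¬X₁ → δ_n ; true at x iff x ≥ (n+1)/(n+2). -/
def sigma (n : ℕ) : LForm := LForm.imp (LForm.neg LForm.X1) (delta n)

lemma gval_delta : ∀ n : ℕ, gval (delta n) = toLex (1, -(n + 1 : ℤ)) := by
  intro n
  induction n with
  | zero => show toLex ((1 : ℤ), (-1 : ℤ)) = _ ; norm_num
  | succ n ih =>
      show tt - mvImp tt (toLex (1, -1)) (tt - gval (delta n)) = _
      rw [ih]
      have h1 : tt - toLex (1, -((n : ℤ) + 1)) = toLex (0, (n : ℤ) + 1) := by
        unfold tt; rw [lex_sub]; norm_num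
      rw [h1]
      have h2 : mvImp tt (toLex (1, -1)) (toLex (0, (n : ℤ) + 1)) =
          toLex (0, (n : ℤ) + 2) := by
        unfold mvImp tt
        rw [lex_sub, lex_add]
        have : ((1 : ℤ) - 1 + 0, (0 : ℤ) - -1 + ((n : ℤ) + 1)) = ((0 : ℤ), (n : ℤ) + 2) := by
          norm_num; ring
        rw [this]
        exact min_eq_right (lex_le.2 (Or.inl one_pos))
      rw [h2]
      unfold tt; rw [lex_sub]
      norm_num
      push_cast
      ring

lemma gval_sigma (n : ℕ) : gval (sigma n) = tt := by
  show mvImp tt (tt - gval LForm.X1) (gval (delta n)) = tt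
  rw [gval_delta]
  have h1 : tt - gval LForm.X1 = toLex (0, 1) := by
    show tt - toLex (1, -1) = _
    unfold tt; rw [lex_sub]; norm_num
  rw [h1]
  exact mvImp_eq_top_iff.2 (lex_le.2 (Or.inl one_pos))

/-- Soundness of `LProv` for the valuation `gval`. -/
lemma sound {α : LForm} (h : LProv (Set.range sigma) α) : gval α = tt := by
  induction h with
  | hyp hmem =>
      obtain ⟨n, rfl⟩ := hmem
      exact gval_sigma n
  | a0 α =>
      exact mvImp_eq_top_iff.2 (gval_bounds α).1
  | a1 α β =>
      refine mvImp_eq_top_iff.2 (le_min (gval_bounds α).2 ?_)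
      rw [show tt - gval β + gval α = gval α + (tt - gval β) by abel]
      exact le_add_of_nonneg_right (sub_nonneg.2 (gval_bounds β).2)
  | a2 α β γ =>
      exact mvImp_eq_top_iff.2 (mvImp_A2 _ _ _)
  | a3 α β =>
      refine mvImp_eq_top_iff.2 (le_of_eq ?_)
      show mvImp tt (mvImp tt (gval α) (gval β)) (gval β) =
        mvImp tt (mvImp tt (gval β) (gval α)) (gval α)
      rw [mvImp_max (gval_bounds α).2 (gval_bounds β).2,
        mvImp_max (gval_bounds β).2 (gval_bounds α).2, max_comm]
  | a4 α β =>
      refine mvImp_eq_top_iff.2 (le_of_eq ?_)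
      show mvImp tt (tt - gval α) (tt - gval β) = mvImp tt (gval β) (gval α)
      unfold mvImp
      congr 1
      abel
  | mp hab ha ihab iha =>
      have h1 : gval _ ≤ gval _ := mvImp_eq_top_iff.1 ihab
      exact le_antisymm (gval_bounds _).2 (iha ▸ h1)

end SCF

/-- Łukasiewicz logic fails strong completeness: there are S and α with
S ⊨ α but S ⊬ α. -/
theorem strong_completeness_fails :
    ∃ (S : Set LForm) (α : LForm), LSem S α ∧ ¬ LProv S α := by
  refine ⟨Set.range SCF.sigma, LForm.X1, ?_, ?_⟩
  · intro v hv
    set x := v.w LForm.X1 with hxdef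
    obtain ⟨hx0, hx1⟩ := v.mem01 LForm.X1
    have hd01 : ∀ n, v.w (SCF.delta n) ∈ Set.Icc (0:ℝ) 1 := fun n => v.mem01 _
    have hdelta : ∀ n : ℕ, v.w (SCF.delta n) ≤ max 0 (1 - ((n : ℝ) + 1) * (1 - x)) := by
      intro n
      induction n with
      | zero =>
          have : (1 : ℝ) - ((0 : ℕ) + 1 : ℝ) * (1 - x) = x := by push_cast; ring
          rw [this]
          exact le_max_right _ _
      | succ n ih =>
          have hw : v.w (SCF.delta (n + 1)) =
              1 - min 1 (1 - (x - (1 - v.w (SCF.delta n)))) := by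
            show v.w (LForm.neg _) = _
            rw [v.map_neg, v.map_imp, v.map_neg]
          set d := v.w (SCF.delta n) with hddef
          have hd0 := (hd01 n).1
          rcases le_total (1 : ℝ) (1 - (x - (1 - d))) with hmin | hmin
          · rw [hw, min_eq_left hmin]
            simpa using le_max_left (0:ℝ) _
          · rw [hw, min_eq_right hmin]
            rcases le_total (1 - ((n : ℝ) + 1) * (1 - x)) 0 with hc | hc
            · have hdle : d ≤ 0 := le_trans ih (by rw [max_eq_left hc])
              have : (1 : ℝ) - (1 - (x - (1 - d))) ≤ 0 := by linarith
              exact le_trans this (le_max_left _ _)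
            · have hdle : d ≤ 1 - ((n : ℝ) + 1) * (1 - x) :=
                le_trans ih (by rw [max_eq_right hc])
              have : (1 : ℝ) - (1 - (x - (1 - d))) ≤
                  1 - ((n : ℝ) + 1 + 1) * (1 - x) := by nlinarith
              refine le_trans this (le_trans ?_ (le_max_right _ _))
              push_cast
              linarith
    have hsig : ∀ n : ℕ, 1 - x ≤ v.w (SCF.delta n) := by
      intro n
      have h := hv (SCF.sigma n) ⟨n, rfl⟩
      have hw : v.w (SCF.sigma n) =
          min 1 (1 - ((1 - x) - v.w (SCF.delta n))) := by
        show v.w (LForm.imp _ _) = _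
        rw [v.map_imp, v.map_neg]
      rw [hw] at h
      have := min_eq_left_iff.1 h
      linarith
    by_contra hne
    have hxlt : x < 1 := lt_of_le_of_ne hx1 hne
    have heps : 0 < 1 - x := by linarith
    obtain ⟨n, hn⟩ := exists_nat_gt (1 / (1 - x))
    have h1 : 1 < (n : ℝ) * (1 - x) := by
      rw [div_lt_iff₀ heps] at hn
      linarith
    have h2 : 1 - ((n : ℝ) + 1) * (1 - x) ≤ 0 := by nlinarith
    have h3 := hdelta n
    have h4 := hsig n
    rw [max_eq_left h2] at h3
    linarith
  · intro h
    have := SCF.sound h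
    exact absurd this (by decide)
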